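/- arXiv:math/9909152 — 5 statements merged into one kernel-verified Lean document; each statement's English description precedes it below -/
import Mathlib

section
/- Given four mutually externally tangent spheres in R^3 with pairwise distinct tangency points, the three lines through opposite pairs of tangency points are concurrent: there exists a point M lying on all three lines. -/
open AffineMap in
lemma tangent_point_eq {E : Type*} [NormedAddCommGroup E] [InnerProductSpace ℝ E]
    (a b p : E) (ra rb : ℝ) (hra : 0 < ra) (hrb : 0 < rb)
    (hab : dist a b = ra + rb) (hpa : dist p a = ra) (hpb : dist p b = rb) :
    p = ((ra + rb)⁻¹ * rb) • a + ((ra + rb)⁻¹ * ra) • b := by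
  have hw : Wbtw ℝ a p b := dist_add_dist_eq_iff.mp (by
    rw [dist_comm a p, hpa, hpb, hab])
  obtain ⟨u, hu, rfl⟩ := hw
  have hdl : dist (lineMap a b u : E) a = ‖u‖ * dist a b := dist_lineMap_left a b u
  rw [hpa, hab, Real.norm_eq_abs, abs_of_nonneg hu.1] at hdl
  have hs : (0:ℝ) < ra + rb := by linarith
  have hu' : u = ra / (ra + rb) := by field_simp; linarith [hdl]
  subst hu'
  simp only [lineMap_apply_module]
  match_scalars <;> field_simp <;> ring

/-- For four mutually externally tangent spheres in `ℝ³` with pairwise distinct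
tangency points, the three lines through opposite pairs of tangencies are
concurrent. -/
theorem tangent_spheres_opposite_lines_concurrent
    (x : Fin 4 → EuclideanSpace ℝ (Fin 3)) (r : Fin 4 → ℝ)
    (hr : ∀ i, 0 < r i)
    (htan : ∀ i j, i ≠ j → dist (x i) (x j) = r i + r j)
    (t : Fin 4 → Fin 4 → EuclideanSpace ℝ (Fin 3))
    (ht : ∀ i j, i ≠ j → dist (t i j) (x i) = r i ∧ dist (t i j) (x j) = r j)
    (hdistinct : Function.Injective fun p : {p : Fin 4 × Fin 4 // p.1 < p.2} =>
      t p.1.1 p.1.2) :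
    ∃ M : EuclideanSpace ℝ (Fin 3),
      (∃ l : ℝ, M = l • t 0 1 + (1 - l) • t 2 3) ∧
      (∃ l : ℝ, M = l • t 0 2 + (1 - l) • t 1 3) ∧
      (∃ l : ℝ, M = l • t 0 3 + (1 - l) • t 1 2) := by
  have key : ∀ i j, i ≠ j →
      t i j = ((r i + r j)⁻¹ * r j) • x i + ((r i + r j)⁻¹ * r i) • x j := by
    intro i j hij
    exact tangent_point_eq (x i) (x j) (t i j) (r i) (r j) (hr i) (hr j)
      (htan i j hij) (ht i j hij).1 (ht i j hij).2
  set r0 := r 0; set r1 := r 1; set r2 := r 2; set r3 := r 3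
  have h0 : 0 < r0 := hr 0
  have h1 : 0 < r1 := hr 1
  have h2 : 0 < r2 := hr 2
  have h3 : 0 < r3 := hr 3
  set W : ℝ := r1 * r2 * r3 + r0 * r2 * r3 + r0 * r1 * r3 + r0 * r1 * r2 with hW
  have hWpos : 0 < W := by positivity
  have hW0 : W ≠ 0 := ne_of_gt hWpos
  have h01 : r0 + r1 ≠ 0 := by positivity
  have h23 : r2 + r3 ≠ 0 := by positivity
  have h02 : r0 + r2 ≠ 0 := by positivity
  have h13 : r1 + r3 ≠ 0 := by positivity
  have h03 : r0 + r3 ≠ 0 := by positivity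
  have h12 : r1 + r2 ≠ 0 := by positivity
  refine ⟨W⁻¹ • ((r1 * r2 * r3) • x 0 + (r0 * r2 * r3) • x 1 +
      (r0 * r1 * r3) • x 2 + (r0 * r1 * r2) • x 3), ?_, ?_, ?_⟩
  · refine ⟨(r1 * r2 * r3 + r0 * r2 * r3) / W, ?_⟩
    rw [key 0 1 (by decide), key 2 3 (by decide)]
    match_scalars <;> simp only [show r 0 = r0 from rfl, show r 1 = r1 from rfl, show r 2 = r2 from rfl, show r 3 = r3 from rfl] <;> field_simp <;> ring
  · refine ⟨(r1 * r2 * r3 + r0 * r1 * r3) / W, ?_⟩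
    rw [key 0 2 (by decide), key 1 3 (by decide)]
    match_scalars <;> simp only [show r 0 = r0 from rfl, show r 1 = r1 from rfl, show r 2 = r2 from rfl, show r 3 = r3 from rfl] <;> field_simp <;> ring
  · refine ⟨(r1 * r2 * r3 + r0 * r1 * r2) / W, ?_⟩
    rw [key 0 3 (by decide), key 1 2 (by decide)]
    match_scalars <;> simp only [show r 0 = r0 from rfl, show r 1 = r1 from rfl, show r 2 = r2 from rfl, show r 3 = r3 from rfl] <;> field_simp <;> ring
end

section
/- Given four mutually externally tangent circles in R^2, the three lines through opposite pairs of tangency points are concurrent. -/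
/-- For four mutually externally tangent circles in `ℝ²`, the three lines
through opposite pairs of tangency points are concurrent. -/
theorem tangent_circles_opposite_lines_concurrent
    (x : Fin 4 → EuclideanSpace ℝ (Fin 2)) (r : Fin 4 → ℝ)
    (hr : ∀ i, 0 < r i)
    (htan : ∀ i j, i ≠ j → dist (x i) (x j) = r i + r j)
    (t : Fin 4 → Fin 4 → EuclideanSpace ℝ (Fin 2))
    (ht : ∀ i j, i ≠ j → dist (t i j) (x i) = r i ∧ dist (t i j) (x j) = r j) :
    ∃ M : EuclideanSpace ℝ (Fin 2),
      (∃ l : ℝ, M = l • t 0 1 + (1 - l) • t 2 3) ∧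
      (∃ l : ℝ, M = l • t 0 2 + (1 - l) • t 1 3) ∧
      (∃ l : ℝ, M = l • t 0 3 + (1 - l) • t 1 2) := by
  -- key formula for tangency points
  have key : ∀ i j, i ≠ j →
      t i j = (r j / (r i + r j)) • x i + (r i / (r i + r j)) • x j := by
    intro i j hij
    have hrij : 0 < r i + r j := add_pos (hr i) (hr j)
    obtain ⟨hti, htj⟩ := ht i j hij
    have hsum : dist (x i) (t i j) + dist (t i j) (x j) = dist (x i) (x j) := by
      rw [dist_comm (x i), hti, htj, htan i j hij]
    obtain ⟨c, ⟨hc0, hc1⟩, hc⟩ := dist_add_dist_eq_iff.mp hsum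
    have hline : t i j = x i + c • (x j - x i) := by
      rw [← hc]; simp [AffineMap.lineMap_apply]; module
    have hdist : dist (t i j) (x i) = c * (r i + r j) := by
      rw [hline]
      have h : x i + c • (x j - x i) - x i = c • (x j - x i) := by abel
      rw [dist_eq_norm, h, norm_smul, Real.norm_eq_abs, abs_of_nonneg hc0,
        ← dist_eq_norm, dist_comm, htan i j hij]
    have hcval : c = r i / (r i + r j) := by
      rw [hti] at hdist
      field_simp
      linarith [hdist]
    rw [hline, hcval]
    have hne : r i + r j ≠ 0 := hrij.ne'
    match_scalars <;> field_simp <;> ring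
  -- barycentric weights
  have hS : (0:ℝ) < r 1 * r 2 * r 3 + r 0 * r 2 * r 3 + r 0 * r 1 * r 3 + r 0 * r 1 * r 2 := by
    have h0 := hr 0; have h1 := hr 1; have h2 := hr 2; have h3 := hr 3
    positivity
  set S : ℝ := r 1 * r 2 * r 3 + r 0 * r 2 * r 3 + r 0 * r 1 * r 3 + r 0 * r 1 * r 2 with hSdef
  have hSne : S ≠ 0 := hS.ne'
  have h01 : r 0 + r 1 ≠ 0 := (add_pos (hr 0) (hr 1)).ne'
  have h23 : r 2 + r 3 ≠ 0 := (add_pos (hr 2) (hr 3)).ne'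
  have h02 : r 0 + r 2 ≠ 0 := (add_pos (hr 0) (hr 2)).ne'
  have h13 : r 1 + r 3 ≠ 0 := (add_pos (hr 1) (hr 3)).ne'
  have h03 : r 0 + r 3 ≠ 0 := (add_pos (hr 0) (hr 3)).ne'
  have h12 : r 1 + r 2 ≠ 0 := (add_pos (hr 1) (hr 2)).ne'
  refine ⟨S⁻¹ • ((r 1 * r 2 * r 3) • x 0 + (r 0 * r 2 * r 3) • x 1
      + (r 0 * r 1 * r 3) • x 2 + (r 0 * r 1 * r 2) • x 3), ?_, ?_, ?_⟩
  · exact ⟨(r 2 * r 3 * (r 0 + r 1)) / S, by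
      rw [key 0 1 (by decide), key 2 3 (by decide)]
      match_scalars <;> field_simp <;> ring⟩
  · exact ⟨(r 1 * r 3 * (r 0 + r 2)) / S, by
      rw [key 0 2 (by decide), key 1 3 (by decide)]
      match_scalars <;> field_simp <;> ring⟩
  · exact ⟨(r 1 * r 2 * (r 0 + r 3)) / S, by
      rw [key 0 3 (by decide), key 1 2 (by decide)]
      match_scalars <;> field_simp <;> ring⟩
end

section
/- Let ABC be a nondegenerate triangle with tangency points t_{BC} on BC, t_{AC} on AC, t_{AB} on AB of the three mutually tangent circles centered at the vertices (equivalently, the incircle touch points). Then the three lines A t_{BC}, B t_{AC}, C t_{AB} are concurrent (at the Gergonne point). -/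
set_option maxHeartbeats 1000000

/-- A point of a segment is determined by its distance to one endpoint. -/
lemma seg_point_eq {V : Type*} [NormedAddCommGroup V] [NormedSpace ℝ V]
    (P Q t : V) (ht : t ∈ segment ℝ P Q) (d L : ℝ)
    (hd : dist t P = d) (hL : dist P Q = L) (hL0 : L ≠ 0) :
    t = (1 - d / L) • P + (d / L) • Q := by
  obtain ⟨u, v, hu, hv, huv, heq⟩ := ht
  have hu' : u = 1 - v := by linarith
  have htP : t - P = v • (Q - P) := by
    rw [← heq, hu']; module
  have hdist : dist t P = v * L := by
    rw [dist_eq_norm, htP, norm_smul, Real.norm_of_nonneg hv, ← hL, dist_comm,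
      dist_eq_norm]
  have hv' : v = d / L := by
    field_simp
    linarith [hdist.symm.trans hd]
  rw [← heq, hu', hv']

/-- The three cevians from the vertices of a nondegenerate triangle to the
opposite incircle touch points are concurrent (at the Gergonne point). -/
theorem gergonne_cevians_concurrent
    (A B C : EuclideanSpace ℝ (Fin 2))
    (hnc : ¬ Collinear ℝ ({A, B, C} : Set (EuclideanSpace ℝ (Fin 2))))
    (a b c : ℝ)
    (ha : a = dist B C) (hb : b = dist C A) (hc : c = dist A B)
    (tBC tCA tAB : EuclideanSpace ℝ (Fin 2))
    (htBC : dist tBC B = (a - b + c) / 2 ∧ dist tBC C = (a + b - c) / 2 ∧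
      tBC ∈ segment ℝ B C)
    (htCA : dist tCA C = (a + b - c) / 2 ∧ dist tCA A = (-a + b + c) / 2 ∧
      tCA ∈ segment ℝ C A)
    (htAB : dist tAB A = (-a + b + c) / 2 ∧ dist tAB B = (a - b + c) / 2 ∧
      tAB ∈ segment ℝ A B) :
    ∃ G : EuclideanSpace ℝ (Fin 2),
      (∃ l : ℝ, G = l • A + (1 - l) • tBC) ∧
      (∃ l : ℝ, G = l • B + (1 - l) • tCA) ∧
      (∃ l : ℝ, G = l • C + (1 - l) • tAB) := by
  -- distinct vertices
  have hAB : A ≠ B := by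
    intro h; apply hnc; rw [h]
    have : ({B, B, C} : Set (EuclideanSpace ℝ (Fin 2))) = {B, C} := by
      ext p; simp
    rw [this]; exact collinear_pair ℝ B C
  have hBC : B ≠ C := by
    intro h; apply hnc; rw [h]
    have : ({A, C, C} : Set (EuclideanSpace ℝ (Fin 2))) = {A, C} := by
      ext p; simp
    rw [this]; exact collinear_pair ℝ A C
  have hCA : C ≠ A := by
    intro h; apply hnc; rw [h]
    have : ({A, B, A} : Set (EuclideanSpace ℝ (Fin 2))) = {A, B} := by
      ext p; simp; tauto
    rw [this]; exact collinear_pair ℝ A B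
  have ha0 : 0 < a := by rw [ha]; exact dist_pos.mpr hBC
  have hb0 : 0 < b := by rw [hb]; exact dist_pos.mpr hCA
  have hc0 : 0 < c := by rw [hc]; exact dist_pos.mpr hAB
  set x : ℝ := (-a + b + c) / 2 with hxdef
  set y : ℝ := (a - b + c) / 2 with hydef
  set z : ℝ := (a + b - c) / 2 with hzdef
  have hx : 0 ≤ x := htAB.1 ▸ dist_nonneg
  have hy : 0 ≤ y := htBC.1 ▸ dist_nonneg
  have hz : 0 ≤ z := htBC.2.1 ▸ dist_nonneg
  have hxy : x + y = c := by rw [hxdef, hydef]; ring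
  have hyz : y + z = a := by rw [hydef, hzdef]; ring
  have hxz : x + z = b := by rw [hxdef, hzdef]; ring
  have hxyne : x + y ≠ 0 := by rw [hxy]; exact ne_of_gt hc0
  have hyzne : y + z ≠ 0 := by rw [hyz]; exact ne_of_gt ha0
  have hxzne : x + z ≠ 0 := by rw [hxz]; exact ne_of_gt hb0
  have hS : 0 < x * y + y * z + x * z := by
    have key : (x + y + z) * (x * y + y * z + x * z)
        = (y + z) * ((x + z) * (x + y)) + x * (y * z) := by ring
    have h1 : 0 < (y + z) * ((x + z) * (x + y)) := by
      rw [hxy, hyz, hxz]; positivity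
    have h2 : 0 ≤ x * (y * z) := by positivity
    have hsum : 0 < x + y + z := by
      have : x + y = c := hxy; linarith
    nlinarith [key, h1, h2, hsum]
  have hSne : x * y + y * z + x * z ≠ 0 := ne_of_gt hS
  have e1 : tBC = (1 - y / (y + z)) • B + (y / (y + z)) • C :=
    seg_point_eq B C tBC htBC.2.2 y (y + z) htBC.1 (by rw [← ha]; linarith) hyzne
  have e2 : tCA = (1 - z / (x + z)) • C + (z / (x + z)) • A :=
    seg_point_eq C A tCA htCA.2.2 z (x + z) htCA.1 (by rw [← hb]; linarith) hxzne
  have e3 : tAB = (1 - x / (x + y)) • A + (x / (x + y)) • B :=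
    seg_point_eq A B tAB htAB.2.2 x (x + y) htAB.1 (by rw [← hc]; linarith) hxyne
  clear_value x y z
  refine ⟨(y * z / (x * y + y * z + x * z)) • A
      + (x * z / (x * y + y * z + x * z)) • B
      + (x * y / (x * y + y * z + x * z)) • C,
    ⟨y * z / (x * y + y * z + x * z), ?_⟩,
    ⟨x * z / (x * y + y * z + x * z), ?_⟩,
    ⟨x * y / (x * y + y * z + x * z), ?_⟩⟩
  · rw [e1]; match_scalars <;> field_simp [show y * (x + z) + x * z ≠ 0 by intro h; apply hSne; linarith, show y * (x + z) + z * x ≠ 0 by intro h; apply hSne; linarith] <;> ring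
  · rw [e2]; match_scalars <;> field_simp [show y * (x + z) + x * z ≠ 0 by intro h; apply hSne; linarith, show y * (x + z) + z * x ≠ 0 by intro h; apply hSne; linarith] <;> ring
  · rw [e3]; match_scalars <;> field_simp [show y * (x + z) + x * z ≠ 0 by intro h; apply hSne; linarith, show y * (x + z) + z * x ≠ 0 by intro h; apply hSne; linarith] <;> ring
end

section
/- Let ABC be a nondegenerate triangle, let O_A, O_B, O_C be the three mutually externally tangent circles centered at the vertices, and let O_S be a circle externally tangent to all three. Then the three lines t_{AS}t_{BC}, t_{BS}t_{AC}, t_{CS}t_{AB} through opposite tangency points are concurrent at the point M = (R_A A + R_B B + R_C C + R_S S)/(R_A + R_B + R_C + R_S), where R_X is the reciprocal of the radius of O_X and S is the center of O_S. -/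
/-- The tangency point of two externally tangent circles is the explicit convex
combination of the centers. -/
lemma tangency_point_eq {E : Type*} [NormedAddCommGroup E] [InnerProductSpace ℝ E]
    (A B P : E) (r1 r2 : ℝ) (h1 : 0 < r1) (h2 : 0 < r2)
    (hPA : dist P A = r1) (hPB : dist P B = r2) (hAB : dist A B = r1 + r2) :
    P = (r2 / (r1 + r2)) • A + (r1 / (r1 + r2)) • B := by
  have hw : Wbtw ℝ A P B := by
    rw [← dist_add_dist_eq_iff, dist_comm A P, hPA, hPB, hAB]
  obtain ⟨u, v, hu, hv, huv, hP⟩ := mem_segment_iff_wbtw.2 hw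
  have hu' : u = 1 - v := by linarith
  have hPA' : P - A = v • (B - A) := by
    rw [← hP, hu']; module
  have hv' : r1 = v * (r1 + r2) := by
    have := hPA
    rw [dist_eq_norm, hPA', norm_smul, Real.norm_eq_abs, abs_of_nonneg hv,
      ← dist_eq_norm, dist_comm B A, hAB] at this
    linarith
  have h12 : r1 + r2 ≠ 0 := by positivity
  have hv2 : v = r1 / (r1 + r2) := by field_simp; linarith
  have hu2 : u = r2 / (r1 + r2) := by rw [hu', hv2]; field_simp; ring
  rw [← hP, hu2, hv2]

lemma strict_tri {E : Type*} [NormedAddCommGroup E] [InnerProductSpace ℝ E]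
    (A B C : E) (hnc : ¬ Collinear ℝ ({A, B, C} : Set E)) :
    dist B C < dist B A + dist A C := by
  rcases lt_or_eq_of_le (dist_triangle B A C) with h | h
  · exact h
  · exfalso
    apply hnc
    have hw : Wbtw ℝ B A C := dist_add_dist_eq_iff.1 h.symm
    have := hw.collinear
    rwa [Set.insert_comm] at this

set_option maxHeartbeats 2000000 in
/-- For a nondegenerate triangle with its three mutually externally tangent
vertex circles and a circle `O_S` (center `S`, radius `rS`) externally tangent
to all three, the three lines through opposite tangency points are concurrent
at `M = (R_A A + R_B B + R_C C + R_S S)/(R_A + R_B + R_C + R_S)`. -/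
theorem opposite_tangency_lines_concurrent_at_M
    (A B C S : EuclideanSpace ℝ (Fin 2))
    (hnc : ¬ Collinear ℝ ({A, B, C} : Set (EuclideanSpace ℝ (Fin 2))))
    (a b c rA rB rC rS : ℝ)
    (ha : a = dist B C) (hb : b = dist C A) (hc : c = dist A B)
    (hrA : rA = (-a + b + c) / 2)
    (hrB : rB = (a - b + c) / 2)
    (hrC : rC = (a + b - c) / 2)
    (hrS : 0 < rS)
    (hSA : dist S A = rS + rA) (hSB : dist S B = rS + rB)
    (hSC : dist S C = rS + rC)
    (tAB tBC tCA tAS tBS tCS : EuclideanSpace ℝ (Fin 2))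
    (htAB : dist tAB A = rA ∧ dist tAB B = rB)
    (htBC : dist tBC B = rB ∧ dist tBC C = rC)
    (htCA : dist tCA C = rC ∧ dist tCA A = rA)
    (htAS : dist tAS A = rA ∧ dist tAS S = rS)
    (htBS : dist tBS B = rB ∧ dist tBS S = rS)
    (htCS : dist tCS C = rC ∧ dist tCS S = rS)
    (RA RB RC RS : ℝ)
    (hRA : RA = rA⁻¹) (hRB : RB = rB⁻¹) (hRC : RC = rC⁻¹) (hRS : RS = rS⁻¹)
    (M : EuclideanSpace ℝ (Fin 2))
    (hM : M = ((RA + RB + RC + RS)⁻¹) • (RA • A + RB • B + RC • C + RS • S)) :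
    (∃ l : ℝ, M = l • tAS + (1 - l) • tBC) ∧
    (∃ l : ℝ, M = l • tBS + (1 - l) • tCA) ∧
    (∃ l : ℝ, M = l • tCS + (1 - l) • tAB) := by
  subst ha hb hc
  have hApos : 0 < rA := by
    have h := strict_tri A B C hnc
    rw [dist_comm B A, dist_comm A C] at h
    rw [hrA]; linarith
  have hBpos : 0 < rB := by
    have h := strict_tri B A C (by
      intro h; apply hnc; rwa [Set.insert_comm] at h)
    rw [dist_comm A C] at h
    rw [hrB]; linarith
  have hCpos : 0 < rC := by
    have h := strict_tri C A B (by
      intro h; apply hnc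
      have he : ({A, B, C} : Set (EuclideanSpace ℝ (Fin 2))) = {C, A, B} := by
        ext x; simp only [Set.mem_insert_iff, Set.mem_singleton_iff]; tauto
      rwa [he])
    rw [dist_comm A C, dist_comm C B] at h
    rw [hrC]; linarith
  -- distances between centers
  have hdAB : dist A B = rA + rB := by rw [hrA, hrB]; ring
  have hdBC : dist B C = rB + rC := by rw [hrB, hrC]; ring
  have hdCA : dist C A = rC + rA := by rw [hrC, hrA]; ring
  have hdAS : dist A S = rA + rS := by rw [dist_comm, hSA]; ring
  have hdBS : dist B S = rB + rS := by rw [dist_comm, hSB]; ring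
  have hdCS : dist C S = rC + rS := by rw [dist_comm, hSC]; ring
  have hAne : rA ≠ 0 := ne_of_gt hApos
  have hBne : rB ≠ 0 := ne_of_gt hBpos
  have hCne : rC ≠ 0 := ne_of_gt hCpos
  have hSne : rS ≠ 0 := ne_of_gt hrS
  subst hRA hRB hRC hRS
  have hT : rA⁻¹ + rB⁻¹ + rC⁻¹ + rS⁻¹ ≠ 0 := by positivity
  -- tangency points as convex combinations
  have heAS : tAS = (rS / (rA + rS)) • A + (rA / (rA + rS)) • S :=
    tangency_point_eq A S tAS rA rS hApos hrS htAS.1 htAS.2 hdAS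
  have heBS : tBS = (rS / (rB + rS)) • B + (rB / (rB + rS)) • S :=
    tangency_point_eq B S tBS rB rS hBpos hrS htBS.1 htBS.2 hdBS
  have heCS : tCS = (rS / (rC + rS)) • C + (rC / (rC + rS)) • S :=
    tangency_point_eq C S tCS rC rS hCpos hrS htCS.1 htCS.2 hdCS
  have heBC : tBC = (rC / (rB + rC)) • B + (rB / (rB + rC)) • C :=
    tangency_point_eq B C tBC rB rC hBpos hCpos htBC.1 htBC.2 hdBC
  have heCA : tCA = (rA / (rC + rA)) • C + (rC / (rC + rA)) • A :=
    tangency_point_eq C A tCA rC rA hCpos hApos htCA.1 htCA.2 hdCA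
  have heAB : tAB = (rB / (rA + rB)) • A + (rA / (rA + rB)) • B :=
    tangency_point_eq A B tAB rA rB hApos hBpos htAB.1 htAB.2 hdAB
  have hASne : rA + rS ≠ 0 := by positivity
  have hBSne : rB + rS ≠ 0 := by positivity
  have hCSne : rC + rS ≠ 0 := by positivity
  have hBCne : rB + rC ≠ 0 := by positivity
  have hCAne : rC + rA ≠ 0 := by positivity
  have hABne : rA + rB ≠ 0 := by positivity
  refine ⟨⟨(rA⁻¹ + rS⁻¹) / (rA⁻¹ + rB⁻¹ + rC⁻¹ + rS⁻¹), ?_⟩,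
          ⟨(rB⁻¹ + rS⁻¹) / (rA⁻¹ + rB⁻¹ + rC⁻¹ + rS⁻¹), ?_⟩,
          ⟨(rC⁻¹ + rS⁻¹) / (rA⁻¹ + rB⁻¹ + rC⁻¹ + rS⁻¹), ?_⟩⟩
  · rw [hM, heAS, heBC]
    match_scalars <;> field_simp <;> ring
  · rw [hM, heBS, heCA]
    match_scalars <;> field_simp <;> ring
  · rw [hM, heCS, heAB]
    match_scalars <;> field_simp <;> ring
end

section
/- Let ABC be a nondegenerate triangle, O_A the circle centered at A with radius (-a+b+c)/2, t_{BC} the tangency point of the circles centered at B and C, and O_S the inner Soddy circle with tangency point t_{AS} on O_A. Let ℓ_A be the line through A perpendicular to BC. Then the line through t_{AS} and t_{BC} meets ℓ_A at a point lying on the circle O_A; i.e., ℓ_A, the line t_{AS}t_{BC}, and the circle O_A have a common point. -/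
set_option maxHeartbeats 2000000 in
/-- The altitude line `ℓ_A` through `A` perpendicular to `BC`, the line
`t_{AS} t_{BC}`, and the circle `O_A` have a common point. -/
theorem altitude_line_tangency_line_circle_coincident
    (A B C S : EuclideanSpace ℝ (Fin 2))
    (hnc : ¬ Collinear ℝ ({A, B, C} : Set (EuclideanSpace ℝ (Fin 2))))
    (a b c rA rB rC rS : ℝ)
    (ha : a = dist B C) (hb : b = dist C A) (hc : c = dist A B)
    (hrA : rA = (-a + b + c) / 2)
    (hrB : rB = (a - b + c) / 2)
    (hrC : rC = (a + b - c) / 2)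
    (hrS : 0 < rS)
    (hSA : dist S A = rS + rA) (hSB : dist S B = rS + rB)
    (hSC : dist S C = rS + rC)
    (tBC tAS : EuclideanSpace ℝ (Fin 2))
    (htBC : dist tBC B = rB ∧ dist tBC C = rC)
    (htAS : dist tAS A = rA ∧ dist tAS S = rS) :
    ∃ p : EuclideanSpace ℝ (Fin 2),
      -- p lies on ℓ_A, the line through A perpendicular to BC
      (inner ℝ (p - A) (C - B) : ℝ) = 0 ∧
      -- p lies on the line through t_{AS} and t_{BC}
      (∃ l : ℝ, p = l • tAS + (1 - l) • tBC) ∧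
      -- p lies on the circle O_A
      dist p A = rA := by
  have hrA0 : 0 ≤ rA := htAS.1 ▸ dist_nonneg
  have hrB0 : 0 ≤ rB := htBC.1 ▸ dist_nonneg
  have hrC0 : 0 ≤ rC := htBC.2 ▸ dist_nonneg
  have hBC : B ≠ C := by
    rintro rfl
    refine hnc ((collinear_pair ℝ A B).subset ?_)
    intro x hx
    simp only [Set.mem_insert_iff, Set.mem_singleton_iff] at hx ⊢
    tauto
  have ha0 : 0 < a := by rw [ha]; exact dist_pos.2 hBC
  have hden : 0 < rA + rS := by linarith
  -- tangency points are on the segments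
  have htBC' : tBC = AffineMap.lineMap B C (rB / a) := by
    apply eq_lineMap_of_dist_eq_mul_of_dist_eq_mul
    · rw [dist_comm, htBC.1, ← ha, div_mul_cancel₀ _ ha0.ne']
    · rw [htBC.2, ← ha, sub_mul, one_mul, div_mul_cancel₀ _ ha0.ne']
      linarith
  have htAS' : tAS = AffineMap.lineMap A S (rA / (rA + rS)) := by
    apply eq_lineMap_of_dist_eq_mul_of_dist_eq_mul
    · rw [dist_comm, htAS.1, dist_comm A S, hSA, add_comm rS rA,
        div_mul_cancel₀ _ hden.ne']
    · rw [htAS.2, dist_comm A S, hSA, add_comm rS rA, sub_mul, one_mul,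
        div_mul_cancel₀ _ hden.ne']
      ring
  -- inner product values
  have nuu : ‖B - A‖ = c := by rw [hc, dist_comm, dist_eq_norm]
  have nvv : ‖C - A‖ = b := by rw [hb, dist_eq_norm]
  have nww : ‖S - A‖ = rS + rA := by rw [← hSA, dist_eq_norm]
  have huu : (inner ℝ (B - A) (B - A) : ℝ) = c ^ 2 := by
    rw [real_inner_self_eq_norm_sq, nuu]
  have hvv : (inner ℝ (C - A) (C - A) : ℝ) = b ^ 2 := by
    rw [real_inner_self_eq_norm_sq, nvv]
  have hww : (inner ℝ (S - A) (S - A) : ℝ) = (rS + rA) ^ 2 := by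
    rw [real_inner_self_eq_norm_sq, nww]
  have huv : (inner ℝ (B - A) (C - A) : ℝ) = (b ^ 2 + c ^ 2 - a ^ 2) / 2 := by
    have h := norm_sub_sq_real (B - A) (C - A)
    rw [sub_sub_sub_cancel_right, nuu, nvv, ← dist_eq_norm, ← ha] at h
    linarith
  have hwu : (inner ℝ (S - A) (B - A) : ℝ)
      = ((rS + rA) ^ 2 + c ^ 2 - (rS + rB) ^ 2) / 2 := by
    have h := norm_sub_sq_real (S - A) (B - A)
    rw [sub_sub_sub_cancel_right, nuu, nww, ← dist_eq_norm, hSB] at h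
    linarith
  have hwv : (inner ℝ (S - A) (C - A) : ℝ)
      = ((rS + rA) ^ 2 + b ^ 2 - (rS + rC) ^ 2) / 2 := by
    have h := norm_sub_sq_real (S - A) (C - A)
    rw [sub_sub_sub_cancel_right, nvv, nww, ← dist_eq_norm, hSC] at h
    linarith
  have huv' : (inner ℝ (C - A) (B - A) : ℝ) = (b ^ 2 + c ^ 2 - a ^ 2) / 2 := by
    rw [real_inner_comm]; exact huv
  have hwu' : (inner ℝ (B - A) (S - A) : ℝ)
      = ((rS + rA) ^ 2 + c ^ 2 - (rS + rB) ^ 2) / 2 := by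
    rw [real_inner_comm]; exact hwu
  have hwv' : (inner ℝ (C - A) (S - A) : ℝ)
      = ((rS + rA) ^ 2 + b ^ 2 - (rS + rC) ^ 2) / 2 := by
    rw [real_inner_comm]; exact hwv
  -- the common point
  set l : ℝ := (rA + rS) / (2 * rS) with hl
  set p : EuclideanSpace ℝ (Fin 2) := l • tAS + (1 - l) • tBC with hp
  have hpA : p - A = ((rS - rA) * rC / (2 * rS * a)) • (B - A)
      + ((rS - rA) * rB / (2 * rS * a)) • (C - A)
      + (rA / (2 * rS)) • (S - A) := by
    have harC : rC = a - rB := by rw [hrB, hrC]; ring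
    rw [hp, htBC', htAS', AffineMap.lineMap_apply_module,
      AffineMap.lineMap_apply_module, hl, harC]
    match_scalars
    all_goals field_simp
    all_goals try ring
    all_goals exact Or.inl trivial
  refine ⟨p, ?_, ⟨l, hp⟩, ?_⟩
  · have hd : C - B = (C - A) - (B - A) := by abel
    rw [hpA, hd, inner_sub_right]
    simp only [inner_add_left, real_inner_smul_left]
    simp only [huu, hvv, hww, huv, huv', hwu, hwu', hwv, hwv']
    subst hrA hrB hrC
    field_simp
    ring
  · have hsq : ‖p - A‖ ^ 2 = rA ^ 2 := by
      rw [← real_inner_self_eq_norm_sq, hpA]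
      simp only [inner_add_left, inner_add_right, real_inner_smul_left,
        real_inner_smul_right]
      simp only [huu, hvv, hww, huv, huv', hwu, hwu', hwv, hwv']
      subst hrA hrB hrC
      field_simp
      ring
    have h1 := congrArg Real.sqrt hsq
    rw [Real.sqrt_sq (norm_nonneg _), Real.sqrt_sq hrA0] at h1
    rw [dist_eq_norm, h1]
end
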